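/- Let E be a real inner product space with norm ‖·‖, let M > 0, and let B : E × E → ℝ be a symmetric bilinear form with |B(u, v)| ≤ M ‖u‖ ‖v‖ for all u, v ∈ E. Let ℓ₁, ℓ₂ : E → ℝ be linear maps with |ℓ₁(u)| ≤ M ‖u‖ and |ℓ₂(u)| ≤ M ‖u‖ for all u, and let v₁ ∈ E satisfy ℓ₁(v₁) = 1, ℓ₂(v₁) = 0, and ‖v₁‖ ≤ M. Suppose C > 0 is such that B(f, f) ≥ C ‖f‖² for every f ∈ E with ℓ₁(f) = 0 and ℓ₂(f) = 0. Then for every K > 0 there exist constants C₂ > 0 and C₃ ≥ 0 such that for every u ∈ E with ‖u‖ ≤ 1/2, ℓ₂(u) = 0, and |ℓ₁(u)| ≤ K ‖u‖², one has B(u, u) ≥ C₂ ‖u‖² − C₃ ‖u‖³. -/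

import Mathlib

set_option maxHeartbeats 1000000 in
/-- abstract lower bound on the second variation: in a real inner
product space, a bounded symmetric bilinear form `B` that is coercive on the
codimension-two subspace `ℓ₁ = ℓ₂ = 0` satisfies
`B(u,u) ≥ C₂‖u‖² - C₃‖u‖³` for all small `u` with `ℓ₂(u) = 0` and `|ℓ₁(u)| ≤ K‖u‖²`. -/
theorem stmt_11 (E : Type*) [NormedAddCommGroup E] [InnerProductSpace ℝ E]
    (M : ℝ) (hM : 0 < M)
    (B : E →ₗ[ℝ] E →ₗ[ℝ] ℝ) (hBsymm : ∀ u v : E, B u v = B v u)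
    (hBbdd : ∀ u v : E, |B u v| ≤ M * ‖u‖ * ‖v‖)
    (ℓ₁ ℓ₂ : E →ₗ[ℝ] ℝ)
    (hℓ₁ : ∀ u : E, |ℓ₁ u| ≤ M * ‖u‖) (hℓ₂ : ∀ u : E, |ℓ₂ u| ≤ M * ‖u‖)
    (v₁ : E) (hv₁ℓ₁ : ℓ₁ v₁ = 1) (hv₁ℓ₂ : ℓ₂ v₁ = 0) (hv₁norm : ‖v₁‖ ≤ M)
    (C : ℝ) (hC : 0 < C)
    (hcoer : ∀ f : E, ℓ₁ f = 0 → ℓ₂ f = 0 → B f f ≥ C * ‖f‖ ^ 2) :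
    ∀ K : ℝ, 0 < K →
      ∃ C₂ C₃ : ℝ, 0 < C₂ ∧ 0 ≤ C₃ ∧
        ∀ u : E, ‖u‖ ≤ 1 / 2 → ℓ₂ u = 0 → |ℓ₁ u| ≤ K * ‖u‖ ^ 2 →
          B u u ≥ C₂ * ‖u‖ ^ 2 - C₃ * ‖u‖ ^ 3 := by
  intro K hK
  refine ⟨C, 2*C*K*M + 2*K*M^2 + 2*K^2*M^3, hC, by positivity, ?_⟩
  intro u hu hℓ2u hℓ1u
  set n := ‖u‖ with hn
  have hn0 : 0 ≤ n := norm_nonneg u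
  set a := ℓ₁ u with ha
  set w := u - a • v₁ with hw
  have hwℓ1 : ℓ₁ w = 0 := by
    simp [hw, map_sub, map_smul, hv₁ℓ₁, smul_eq_mul, ha]
  have hwℓ2 : ℓ₂ w = 0 := by
    simp [hw, map_sub, map_smul, hv₁ℓ₂, hℓ2u, smul_eq_mul]
  have hBww := hcoer w hwℓ1 hwℓ2
  have hexp : B u u = B w w + 2 * (a * B w v₁) + a * a * B v₁ v₁ := by
    have hu' : u = w + a • v₁ := by simp [hw]
    rw [hu']
    simp only [map_add, map_smul, LinearMap.add_apply, LinearMap.smul_apply,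
      smul_eq_mul]
    rw [hBsymm v₁ w]
    ring
  -- inner product bound
  have hinner : |(inner ℝ u v₁ : ℝ)| ≤ n * M := by
    have := abs_real_inner_le_norm u v₁
    nlinarith [norm_nonneg v₁]
  have h1 : a * (inner ℝ u v₁ : ℝ) ≤ K * n ^ 2 * (n * M) := by
    calc a * (inner ℝ u v₁ : ℝ) ≤ |a * (inner ℝ u v₁ : ℝ)| := le_abs_self _
      _ = |a| * |(inner ℝ u v₁ : ℝ)| := abs_mul _ _
      _ ≤ K * n ^ 2 * (n * M) :=
        mul_le_mul hℓ1u hinner (abs_nonneg _) (by positivity)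
  have hw2 : ‖w‖ ^ 2 = n ^ 2 - 2 * (a * (inner ℝ u v₁ : ℝ)) + a ^ 2 * ‖v₁‖ ^ 2 := by
    rw [hw, norm_sub_sq_real, real_inner_smul_right, norm_smul]
    simp [mul_pow, sq_abs, hn]
  have hw2lb : ‖w‖ ^ 2 ≥ n ^ 2 - 2 * (K * M) * n ^ 3 := by
    rw [hw2]
    nlinarith [sq_nonneg (a * ‖v₁‖)]
  have hwub : ‖w‖ ≤ n + K * M * n ^ 2 := by
    calc ‖w‖ ≤ ‖u‖ + ‖a • v₁‖ := norm_sub_le _ _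
      _ = n + |a| * ‖v₁‖ := by rw [norm_smul]; rfl
      _ ≤ n + K * n ^ 2 * M := by
          have := mul_le_mul hℓ1u hv₁norm (norm_nonneg v₁) (by positivity)
          linarith
      _ = n + K * M * n ^ 2 := by ring
  have hcross : |B w v₁| ≤ M * ‖w‖ * M := by
    have h := hBbdd w v₁
    nlinarith [norm_nonneg w, mul_nonneg hM.le (norm_nonneg w)]
  have h2 : a * B w v₁ ≥ -(K * n ^ 2 * (M * (n + K * M * n ^ 2) * M)) := by
    have habs : |a * B w v₁| ≤ K * n ^ 2 * (M * (n + K * M * n ^ 2) * M) := by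
      rw [abs_mul]
      apply mul_le_mul hℓ1u _ (abs_nonneg _) (by positivity)
      calc |B w v₁| ≤ M * ‖w‖ * M := hcross
        _ ≤ M * (n + K * M * n ^ 2) * M := by
            have := mul_le_mul_of_nonneg_left hwub (mul_nonneg hM.le hM.le)
            linarith
    linarith [neg_abs_le (a * B w v₁)]
  have h3 : a * a * B v₁ v₁ ≥ -((K * n ^ 2) ^ 2 * M ^ 3) := by
    have hBv : |B v₁ v₁| ≤ M ^ 3 := by
      have h := hBbdd v₁ v₁
      have h' := mul_le_mul_of_nonneg_left
        (mul_le_mul hv₁norm hv₁norm (norm_nonneg v₁) hM.le) hM.le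
      nlinarith
    have habs : |a * a * B v₁ v₁| ≤ (K * n ^ 2) ^ 2 * M ^ 3 := by
      rw [abs_mul, abs_mul]
      have haK : |a| ≤ K * n ^ 2 := hℓ1u
      calc |a| * |a| * |B v₁ v₁| ≤ (K * n ^ 2) * (K * n ^ 2) * M ^ 3 := by
            apply mul_le_mul (mul_le_mul haK haK (abs_nonneg _) (by positivity)) hBv
              (abs_nonneg _) (by positivity)
        _ = (K * n ^ 2) ^ 2 * M ^ 3 := by ring
    linarith [neg_abs_le (a * a * B v₁ v₁)]
  have hhalf : n ≤ 1 / 2 := hu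
  have hCw : C * (n ^ 2 - 2 * (K * M) * n ^ 3) ≤ C * ‖w‖ ^ 2 :=
    mul_le_mul_of_nonneg_left hw2lb hC.le
  have key : 0 ≤ K ^ 2 * M ^ 3 * n ^ 3 * (2 - 3 * n) :=
    mul_nonneg (by positivity) (by linarith)
  rw [hexp]
  nlinarith [hBww, hCw, h2, h3, key]
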